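/- Let t, u be real numbers with t > 0 and u > 0, and for i ∈ ℕ set b_i = Σ_{m : 2m ≤ i} m·i!/((i−2m)!·m!·m!)·t^{i−2m}·u^m. Then there exists a constant c' > 0 such that b_i ~ c'·i^{1/2}·(t + 2√u)^i as i → ∞; that is, the sequence b_i/(√i·(t + 2√u)^i) converges to c'. -/

import Mathlib

open Filter Real

section AuxBridge
open MeasureTheory Set

lemma prod_ratio (n : ℕ) :
    ∏ i ∈ Finset.range n, (2*(i:ℝ)+1)/(2*(i:ℝ)+2) = ((2*n).choose n : ℝ) / 4^n := by
  induction n with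
  | zero => simp
  | succ k ih =>
    have hkey := Nat.succ_mul_centralBinom_succ k
    simp only [Nat.centralBinom_eq_two_mul_choose] at hkey
    have hkey' : ((k:ℝ)+1) * ((2*(k+1)).choose (k+1) : ℝ)
        = 2*(2*(k:ℝ)+1) * ((2*k).choose k : ℝ) := by exact_mod_cast congrArg (Nat.cast (R := ℝ)) hkey
    rw [Finset.prod_range_succ, ih]
    have h4 : (4:ℝ)^(k+1) = 4 * 4^k := by ring
    have h4k : (4:ℝ)^k ≠ 0 := by positivity
    push_cast
    field_simp
    linear_combination (-2*(4:ℝ)^k) * hkey'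

lemma integral_cos_pow_even (n : ℕ) :
    ∫ x in (0:ℝ)..π, Real.cos x ^ (2*n) = π * ((2*n).choose n : ℝ) / 4^n := by
  have hper : Function.Periodic (fun x : ℝ => Real.sin x ^ (2*n)) π := by
    intro x
    simp only [Real.sin_add_pi]
    rw [Even.neg_pow (even_two_mul n)]
  have h1 : ∫ x in (0:ℝ)..π, Real.cos x ^ (2*n)
      = ∫ x in (0:ℝ)..π, (fun y : ℝ => Real.sin y ^ (2*n)) (x + π/2) := by
    congr 1; ext x; simp [Real.sin_add_pi_div_two]
  rw [h1, intervalIntegral.integral_comp_add_right (fun y : ℝ => Real.sin y ^ (2*n)) (π/2)]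
  have h2 := hper.intervalIntegral_add_eq (π/2) 0
  simp only [zero_add] at h2
  have h3 : (0:ℝ) + π/2 = π/2 := by ring
  have h4 : π/2 + π = π + π/2 := by ring
  rw [h4] at h2
  rw [h3, h2, integral_sin_pow_even, prod_ratio]
  ring

lemma integral_cos_pow_odd (n : ℕ) :
    ∫ x in (0:ℝ)..π, Real.cos x ^ (2*n+1) = 0 := by
  have h := intervalIntegral.integral_comp_sub_left (a := (0:ℝ)) (b := π)
    (fun x : ℝ => Real.cos x ^ (2*n+1)) π
  simp only [Real.cos_pi_sub] at h
  have h2 : ∫ x in (0:ℝ)..π, (-Real.cos x) ^ (2*n+1)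
      = - ∫ x in (0:ℝ)..π, Real.cos x ^ (2*n+1) := by
    rw [← intervalIntegral.integral_neg]
    congr 1; ext x; rw [Odd.neg_pow (by exact odd_two_mul_add_one n)]
  rw [h2] at h
  simp at h
  linarith

lemma sum_eq_integral (t u : ℝ) (hu : 0 < u) (i : ℕ) (hi : 1 ≤ i) :
    ∑ m ∈ Finset.range (i / 2 + 1),
        (m : ℝ) * (Nat.factorial i : ℝ) /
            ((Nat.factorial (i - 2 * m) : ℝ) * (Nat.factorial m : ℝ) * (Nat.factorial m : ℝ)) *
          t ^ (i - 2 * m) * u ^ m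
      = (i * Real.sqrt u / π) *
          ∫ θ in (0:ℝ)..π, Real.cos θ * (t + 2 * Real.sqrt u * Real.cos θ) ^ (i - 1) := by
  set su := Real.sqrt u with hsu
  have hsq : su ^ 2 = u := Real.sq_sqrt hu.le
  have hsupos : 0 < su := Real.sqrt_pos.2 hu
  -- expand the integrand
  have hexp : ∀ θ : ℝ, Real.cos θ * (t + 2 * su * Real.cos θ) ^ (i - 1)
      = ∑ k ∈ Finset.range i,
          ((i-1).choose k : ℝ) * t ^ (i-1-k) * (2*su)^k * Real.cos θ ^ (k+1) := by
    intro θ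
    rw [add_comm t, add_pow, show i - 1 + 1 = i from by omega, Finset.mul_sum]
    refine Finset.sum_congr rfl fun k _ => ?_
    rw [mul_pow]
    ring
  rw [intervalIntegral.integral_congr (g := fun θ => ∑ k ∈ Finset.range i,
        ((i-1).choose k : ℝ) * t ^ (i-1-k) * (2*su)^k * Real.cos θ ^ (k+1))
      (fun θ _ => hexp θ)]
  rw [intervalIntegral.integral_finset_sum (fun k _ => by
    apply Continuous.intervalIntegrable; fun_prop)]
  have heval : ∀ k, (∫ θ in (0:ℝ)..π, ((i-1).choose k : ℝ) * t ^ (i-1-k) * (2*su)^k * Real.cos θ ^ (k+1))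
      = ((i-1).choose k : ℝ) * t ^ (i-1-k) * (2*su)^k * ∫ θ in (0:ℝ)..π, Real.cos θ ^ (k+1) :=
    fun k => intervalIntegral.integral_const_mul _ _
  simp only [heval]
  -- the sum over even k vanishes
  set F : ℕ → ℝ := fun k =>
    ((i-1).choose k : ℝ) * t ^ (i-1-k) * (2*su)^k * ∫ θ in (0:ℝ)..π, Real.cos θ ^ (k+1) with hF
  have hvanish : ∀ k, Even k → F k = 0 := by
    intro k ⟨r, hr⟩
    have : k + 1 = 2*r + 1 := by omega
    simp only [hF, this, integral_cos_pow_odd, mul_zero]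
  have hfilter : ∑ k ∈ Finset.range i, F k
      = ∑ k ∈ (Finset.range i).filter (fun k => Odd k), F k := by
    refine (Finset.sum_subset (Finset.filter_subset _ _) fun x hx hnx => ?_).symm
    apply hvanish
    simp only [Finset.mem_filter, hx, true_and] at hnx
    exact Nat.not_odd_iff_even.mp hnx
  have hbij : ∑ k ∈ (Finset.range i).filter (fun k => Odd k), F k
      = ∑ j ∈ Finset.range (i/2), F (2*j+1) := by
    refine Finset.sum_nbij' (i := fun k => (k-1)/2) (j := fun j => 2*j+1) ?_ ?_ ?_ ?_ ?_
    · intro a ha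
      simp only [Finset.mem_filter, Finset.mem_range] at ha
      obtain ⟨ha1, j0, hj0⟩ := ha
      show (a-1)/2 ∈ Finset.range (i/2)
      simp only [Finset.mem_range]; omega
    · intro a ha
      simp only [Finset.mem_range] at ha
      show 2*a+1 ∈ (Finset.range i).filter (fun k => Odd k)
      simp only [Finset.mem_filter, Finset.mem_range]
      exact ⟨by omega, a, by omega⟩
    · intro a ha
      simp only [Finset.mem_filter, Finset.mem_range] at ha
      obtain ⟨ha1, j0, hj0⟩ := ha
      show 2*((a-1)/2)+1 = a
      omega
    · intro a _
      show (2*a+1-1)/2 = a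
      omega
    · intro a ha
      simp only [Finset.mem_filter, Finset.mem_range] at ha
      obtain ⟨ha1, j0, hj0⟩ := ha
      show F a = F (2*((a-1)/2)+1)
      congr 1; omega
  rw [hfilter, hbij, Finset.mul_sum]
  -- peel off the `m = 0` term on the left
  rw [Finset.sum_range_succ']
  simp only [Nat.cast_zero, zero_mul, zero_div, mul_zero, zero_mul, add_zero, pow_zero, mul_one]
  have hzero : (0:ℝ) * (Nat.factorial i : ℝ) /
      ((Nat.factorial (i - 2*0) : ℝ) * (Nat.factorial 0 : ℝ) * (Nat.factorial 0 : ℝ)) *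
        t ^ (i - 2*0) * u ^ 0 = 0 := by simp
  refine Finset.sum_congr rfl fun j hj => ?_
  simp only [Finset.mem_range] at hj
  have h2 : 2*(j+1) ≤ i := by omega
  -- evaluate the cosine integral
  have hI : (∫ θ in (0:ℝ)..π, Real.cos θ ^ (2*j+1+1))
      = π * ((2*(j+1)).choose (j+1) : ℝ) / 4^(j+1) := by
    rw [show 2*j+1+1 = 2*(j+1) from by omega, integral_cos_pow_even]
  -- nat identities
  have hA : (i:ℝ) * ((i-1).choose (2*j+1) : ℝ) = ((i).choose (2*(j+1)) : ℝ) * (2*(j+1)) := by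
    have := Nat.add_one_mul_choose_eq (i-1) (2*j+1)
    rw [show i-1+1 = i from by omega, show 2*j+1+1 = 2*(j+1) from by omega] at this
    exact_mod_cast congrArg (Nat.cast (R := ℝ)) this
  have hB : ((i).choose (2*(j+1)) : ℝ)
      = (Nat.factorial i : ℝ) / ((Nat.factorial (2*(j+1)) : ℝ) * (Nat.factorial (i - 2*(j+1)) : ℝ)) :=
    Nat.cast_choose ℝ h2
  have hC : ((2*(j+1)).choose (j+1) : ℝ)
      = (Nat.factorial (2*(j+1)) : ℝ) / ((Nat.factorial (j+1) : ℝ) * (Nat.factorial (j+1) : ℝ)) := by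
    have := Nat.cast_choose ℝ (show j+1 ≤ 2*(j+1) from by omega)
    rwa [show 2*(j+1) - (j+1) = j+1 from by omega] at this
  have hexpt : i - 1 - (2*j+1) = i - 2*(j+1) := by omega
  have e2 : (i.choose (2*(j+1)) : ℝ) * ((2*(j+1)).factorial : ℝ) * ((i - 2*(j+1)).factorial : ℝ)
      = (i.factorial : ℝ) := by
    exact_mod_cast congrArg (Nat.cast (R := ℝ)) (Nat.choose_mul_factorial_mul_factorial h2)
  have e3 : ((2*(j+1)).choose (j+1) : ℝ) * ((j+1).factorial : ℝ) * ((j+1).factorial : ℝ)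
      = ((2*(j+1)).factorial : ℝ) := by
    have := Nat.choose_mul_factorial_mul_factorial (show j+1 ≤ 2*(j+1) from by omega)
    rw [show 2*(j+1) - (j+1) = j+1 from by omega] at this
    exact_mod_cast congrArg (Nat.cast (R := ℝ)) this
  have hsu2 : (2*su)^(2*j+1) * su = 2^(2*j+1) * u^(j+1) := by
    rw [mul_pow, mul_assoc, ← pow_succ, show 2*j+1+1 = 2*(j+1) from by omega, pow_mul, hsq]
  have h4 : (4:ℝ)^(j+1) = 2^(2*j+1) * 2 := by
    rw [show (4:ℝ) = 2^2 by norm_num, ← pow_mul]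
    rw [show 2*(j+1) = 2*j+1+1 from by omega, pow_succ]
  have hfac : ∀ n : ℕ, (Nat.factorial n : ℝ) ≠ 0 := fun n => by
    exact_mod_cast (Nat.factorial_pos n).ne'
  have hpi : (π:ℝ) ≠ 0 := Real.pi_ne_zero
  simp only [hF]
  rw [hI, hexpt, show u = su^2 from hsq.symm, h4]
  field_simp
  push_cast
  linear_combination
    (-(((i - 2*(j+1)).factorial : ℝ) * ((j+1).factorial : ℝ)^2 * t ^ (i - 2*(j+1)) * su
        * (su*2)^(2*j+1) * ((2*(j+1)).choose (j+1) : ℝ))) * hA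
    + (-(((i - 2*(j+1)).factorial : ℝ) * (i.choose (2*(j+1)) : ℝ) * (2*((j:ℝ)+1)) * t ^ (i - 2*(j+1))
        * su * (su*2)^(2*j+1))) * e3
    + (-((2*((j:ℝ)+1)) * t ^ (i - 2*(j+1)) * su * (su*2)^(2*j+1))) * e2
lemma tendsto_sin_div_self : Tendsto (fun x : ℝ => Real.sin x / x) (nhdsWithin 0 {(0:ℝ)}ᶜ) (nhds 1) := by
  have h := hasDerivAt_iff_tendsto_slope.mp (Real.hasDerivAt_sin 0)
  rw [Real.cos_zero] at h
  refine h.congr fun x => ?_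
  simp [slope_def_field]

lemma tendsto_log_one_sub_div :
    Tendsto (fun y : ℝ => Real.log (1 - y) / y) (nhdsWithin 0 {(0:ℝ)}ᶜ) (nhds (-1)) := by
  have h1 : HasDerivAt (fun y : ℝ => (1:ℝ) - y) (-1) 0 := (hasDerivAt_id 0).const_sub 1
  have h2 : HasDerivAt (fun y : ℝ => Real.log (1 - y)) (-1) 0 := by
    have := (Real.hasDerivAt_log (by norm_num : (1:ℝ) - 0 ≠ 0)).comp 0 h1
    simpa [Function.comp_def] using this
  have h := hasDerivAt_iff_tendsto_slope.mp h2
  refine h.congr fun x => ?_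
  simp [slope_def_field]

lemma tendsto_half_punctured :
    Tendsto (fun θ : ℝ => θ/2) (nhdsWithin 0 {(0:ℝ)}ᶜ) (nhdsWithin 0 {(0:ℝ)}ᶜ) := by
  rw [tendsto_nhdsWithin_iff]
  constructor
  · have : Tendsto (fun θ : ℝ => θ/2) (nhds 0) (nhds (0/2)) :=
      (continuous_id.div_const 2).tendsto 0
    simpa using this.mono_left nhdsWithin_le_nhds
  · filter_upwards [eventually_mem_nhdsWithin] with x hx
    simpa using fun h => hx (by simpa using h)

lemma one_sub_cos_eq (θ : ℝ) : 1 - Real.cos θ = 2 * Real.sin (θ/2)^2 := by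
  have h := Real.abs_sin_half θ
  have h2 : Real.sin (θ/2)^2 = (1 - Real.cos θ)/2 := by
    rw [← sq_abs, h, Real.sq_sqrt]
    linarith [Real.cos_le_one θ]
  linarith

lemma tendsto_one_sub_cos_div_sq :
    Tendsto (fun θ : ℝ => (1 - Real.cos θ)/θ^2) (nhdsWithin 0 {(0:ℝ)}ᶜ) (nhds (1/2)) := by
  have h1 : Tendsto (fun θ : ℝ => Real.sin (θ/2)/(θ/2)) (nhdsWithin 0 {(0:ℝ)}ᶜ) (nhds 1) :=
    tendsto_sin_div_self.comp tendsto_half_punctured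
  have h2 : Tendsto (fun θ : ℝ => (Real.sin (θ/2)/(θ/2))^2 / 2) (nhdsWithin 0 {(0:ℝ)}ᶜ)
      (nhds (1/2)) := by
    have := (h1.pow 2).div_const 2
    simpa using this
  refine h2.congr' ?_
  filter_upwards [eventually_mem_nhdsWithin] with θ hθ
  have hθ0 : θ ≠ 0 := by simpa using hθ
  rw [div_pow, div_div, one_sub_cos_eq]
  field_simp

lemma cos_lt_one_near {θ : ℝ} (h0 : θ ≠ 0) (hπ : |θ| < π) : Real.cos θ < 1 := by
  obtain ⟨hl, hrr⟩ := abs_lt.mp hπ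
  refine lt_of_le_of_ne (Real.cos_le_one θ) fun heq => h0 ?_
  exact (Real.cos_eq_one_iff_of_lt_of_lt
    (by linarith [Real.pi_pos]) (by linarith [Real.pi_pos])).mp heq

lemma tendsto_log_one_sub_mul_cos (r : ℝ) (hr : 0 < r) :
    Tendsto (fun θ : ℝ => Real.log (1 - r*(1 - Real.cos θ))/θ^2)
      (nhdsWithin 0 {(0:ℝ)}ᶜ) (nhds (-(r/2))) := by
  have habs : ∀ᶠ θ : ℝ in nhdsWithin 0 {(0:ℝ)}ᶜ, |θ| < π := by
    apply Filter.Eventually.filter_mono nhdsWithin_le_nhds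
    have habs0 : Tendsto (fun θ : ℝ => |θ|) (nhds 0) (nhds 0) := by
      simpa using (continuous_abs.tendsto (0:ℝ))
    exact habs0.eventually_lt_const Real.pi_pos
  have hne : ∀ᶠ θ : ℝ in nhdsWithin 0 {(0:ℝ)}ᶜ, r*(1 - Real.cos θ) ≠ 0 := by
    filter_upwards [habs, eventually_mem_nhdsWithin] with θ h1 h2
    have h0 : θ ≠ 0 := by simpa using h2
    have hc := cos_lt_one_near h0 h1
    have : 0 < 1 - Real.cos θ := by linarith
    exact (mul_pos hr this).ne'
  have hy : Tendsto (fun θ : ℝ => r*(1 - Real.cos θ)) (nhdsWithin 0 {(0:ℝ)}ᶜ)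
      (nhdsWithin 0 {(0:ℝ)}ᶜ) := by
    rw [tendsto_nhdsWithin_iff]
    refine ⟨?_, by simpa using hne⟩
    have : Tendsto (fun θ : ℝ => r*(1 - Real.cos θ)) (nhds 0) (nhds (r*(1 - Real.cos 0))) :=
      (continuous_const.mul (continuous_const.sub Real.continuous_cos)).tendsto 0
    simpa using this.mono_left nhdsWithin_le_nhds
  have hlog : Tendsto (fun θ : ℝ => Real.log (1 - r*(1 - Real.cos θ))/(r*(1 - Real.cos θ)))
      (nhdsWithin 0 {(0:ℝ)}ᶜ) (nhds (-1)) := tendsto_log_one_sub_div.comp hy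
  have hprod := (hlog.mul tendsto_one_sub_cos_div_sq).mul_const r
  have hval : (-1) * (1/2) * r = -(r/2) := by ring
  rw [hval] at hprod
  refine hprod.congr' ?_
  filter_upwards [hne, eventually_mem_nhdsWithin] with θ h1 h2
  have h0 : θ ≠ 0 := by simpa using h2
  have h3 : 1 - Real.cos θ ≠ 0 := right_ne_zero_of_mul h1
  field_simp

lemma laplace_limit (t u : ℝ) (ht : 0 < t) (hu : 0 < u) :
    Tendsto (fun i : ℕ => Real.sqrt i * ∫ θ in (0:ℝ)..π,
        Real.cos θ * ((t + 2*Real.sqrt u*Real.cos θ)/(t + 2*Real.sqrt u))^(i-1))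
      atTop (nhds (Real.sqrt (π/(Real.sqrt u/(t + 2*Real.sqrt u)))/2)) := by
  have hπ : (0:ℝ) < π := Real.pi_pos
  set su := Real.sqrt u with hsu
  have hsupos : 0 < su := Real.sqrt_pos.2 hu
  set ρ := t + 2*su with hρ
  have hρpos : 0 < ρ := by positivity
  set a := su/ρ with ha
  have hapos : 0 < a := by positivity
  set g : ℝ → ℝ := fun θ => (t + 2*su*Real.cos θ)/ρ with hg
  have hgcont : Continuous g := by
    apply Continuous.div_const
    fun_prop
  have hgalt : ∀ θ, g θ = 1 - (2*su/ρ)*(1 - Real.cos θ) := by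
    intro θ
    simp only [hg]
    field_simp
    ring
  set c₀ := min (2*t) (4*su) / (ρ*π^2) with hc₀
  have hc₀pos : 0 < c₀ := by
    apply div_pos (lt_min (by positivity) (by positivity)) (by positivity)
  have hc0m : c₀ * (ρ*π^2) = min (2*t) (4*su) := by
    rw [hc₀]; field_simp
  -- pointwise exponential bound for |g θ| on [0, π]
  have hgle : ∀ θ ∈ Icc (0:ℝ) π, |g θ| ≤ Real.exp (-(c₀*θ^2)) := by
    intro θ hθ
    obtain ⟨h0, hπθ⟩ := hθ
    have hjord : θ^2/π^2 ≤ Real.sin (θ/2)^2 := by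
      have h1 : 2/π * (θ/2) ≤ Real.sin (θ/2) :=
        Real.mul_le_sin (by linarith) (by linarith)
      have h2 : (0:ℝ) ≤ θ/π := by positivity
      have h3 : θ/π ≤ Real.sin (θ/2) := by
        calc θ/π = 2/π * (θ/2) := by ring
        _ ≤ _ := h1
      calc θ^2/π^2 = (θ/π)^2 := by rw [div_pow]
      _ ≤ Real.sin (θ/2)^2 := by
        apply pow_le_pow_left₀ h2 h3
    have hcosb : θ^2 * (2/π^2) ≤ 1 - Real.cos θ := by
      rw [one_sub_cos_eq]
      calc θ^2 * (2/π^2) = 2 * (θ^2/π^2) := by ring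
      _ ≤ 2 * Real.sin (θ/2)^2 := by linarith
    have hθsq : θ^2 ≤ π^2 := by nlinarith
    have hm1 : min (2*t) (4*su) ≤ 2*t := min_le_left _ _
    have hm2 : min (2*t) (4*su) ≤ 4*su := min_le_right _ _
    have hcos : -1 ≤ Real.cos θ := Real.neg_one_le_cos θ
    have hx1 : (0:ℝ) ≤ θ^2/π^2 := by positivity
    have hx2 : θ^2/π^2 ≤ 1 := by
      rw [div_le_one (by positivity)]; exact hθsq
    have hkey : c₀ * θ^2 * ρ = min (2*t) (4*su) * (θ^2/π^2) := by
      rw [hc₀]; field_simp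
    have h2su : 2*su*(-1) ≤ 2*su*Real.cos θ :=
      mul_le_mul_of_nonneg_left hcos (by positivity)
    have hcosb2 : 2*(θ^2/π^2) ≤ 1 - Real.cos θ := by
      have : θ^2 * (2/π^2) = 2*(θ^2/π^2) := by ring
      linarith [hcosb]
    have habs : |g θ| ≤ 1 - c₀*θ^2 := by
      rw [abs_le]
      constructor
      · rw [hg, le_div_iff₀ hρpos]
        have p1 : min (2*t) (4*su) * (θ^2/π^2) ≤ 2*t*(θ^2/π^2) :=
          mul_le_mul_of_nonneg_right hm1 hx1
        have p2 : 2*t*(θ^2/π^2) ≤ 2*t*1 := mul_le_mul_of_nonneg_left hx2 (by positivity)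
        simp only [hρ]
        linarith [hkey, p1, p2, h2su]
      · rw [hg, div_le_iff₀ hρpos]
        have p1 : min (2*t) (4*su) * (θ^2/π^2) ≤ 4*su*(θ^2/π^2) :=
          mul_le_mul_of_nonneg_right hm2 hx1
        have p2 : 2*su*(2*(θ^2/π^2)) ≤ 2*su*(1 - Real.cos θ) :=
          mul_le_mul_of_nonneg_left hcosb2 (by positivity)
        simp only [hρ]
        linarith [hkey, p1, p2]
    calc |g θ| ≤ 1 - c₀*θ^2 := habs
    _ ≤ Real.exp (-(c₀*θ^2)) := by linarith [Real.add_one_le_exp (-(c₀*θ^2))]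
  -- the rescaled integrands
  set F : ℕ → ℝ → ℝ := fun i s => Set.indicator (Set.Ioc (0:ℝ) (π * Real.sqrt i))
      (fun s => Real.cos (s/Real.sqrt i) * (g (s/Real.sqrt i))^(i-1)) s with hF
  have hsub : ∀ i : ℕ, 1 ≤ i →
      Real.sqrt i * ∫ θ in (0:ℝ)..π, Real.cos θ * g θ^(i-1) = ∫ s, F i s := by
    intro i hi
    have hipos : (0:ℝ) < i := by exact_mod_cast hi
    have hsipos : 0 < Real.sqrt i := Real.sqrt_pos.2 hipos
    have hcomp := intervalIntegral.integral_comp_div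
      (a := 0) (b := π * Real.sqrt i)
      (fun θ => Real.cos θ * g θ^(i-1)) hsipos.ne'
    rw [zero_div, mul_div_assoc, div_self hsipos.ne', mul_one] at hcomp
    rw [hF]
    simp only []
    rw [MeasureTheory.integral_indicator measurableSet_Ioc,
      ← intervalIntegral.integral_of_le (by positivity : (0:ℝ) ≤ π * Real.sqrt i),
      hcomp, smul_eq_mul]
  set G : ℝ → ℝ := fun s => Set.indicator (Set.Ioi (0:ℝ)) (fun s => Real.exp (-a * s^2)) s
    with hG
  have hGint : ∫ s, G s = Real.sqrt (π/a)/2 := by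
    rw [hG]
    simp only []
    rw [MeasureTheory.integral_indicator measurableSet_Ioi]
    exact integral_gaussian_Ioi a
  have hsqrtTop : Tendsto (fun n : ℕ => Real.sqrt ((n:ℝ)+2)) atTop atTop := by
    apply tendsto_atTop_atTop.2
    intro b
    refine ⟨⌈(b^2:ℝ)⌉₊, fun n hn => ?_⟩
    have h1 : (b^2:ℝ) ≤ (n:ℝ) := by
      calc (b^2:ℝ) ≤ ⌈(b^2:ℝ)⌉₊ := Nat.le_ceil _
      _ ≤ n := by exact_mod_cast hn
    calc b ≤ |b| := le_abs_self b
    _ = Real.sqrt (b^2) := (Real.sqrt_sq_eq_abs b).symm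
    _ ≤ Real.sqrt ((n:ℝ)+2) := Real.sqrt_le_sqrt (by linarith)
  have hcastF : ∀ n : ℕ, ((n+2:ℕ):ℝ) = (n:ℝ)+2 := by intro n; push_cast; ring
  have hdct : Tendsto (fun n : ℕ => ∫ s, F (n+2) s) atTop (nhds (∫ s, G s)) := by
    apply MeasureTheory.tendsto_integral_of_dominated_convergence
      (bound := fun s => Real.exp (-(c₀/2) * s^2))
    · intro n
      have hc : Continuous fun s : ℝ =>
          Real.cos (s/Real.sqrt ((n+2:ℕ):ℝ)) * (g (s/Real.sqrt ((n+2:ℕ):ℝ)))^((n+2)-1) := by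
        exact (Real.continuous_cos.comp (continuous_id.div_const _)).mul
          ((hgcont.comp (continuous_id.div_const _)).pow _)
      exact (hc.stronglyMeasurable.indicator measurableSet_Ioc).aestronglyMeasurable
    · exact integrable_exp_neg_mul_sq (by positivity)
    · intro n
      refine Filter.Eventually.of_forall fun s => ?_
      rw [hF]
      simp only []
      have hN : (0:ℝ) < ((n+2:ℕ):ℝ) := by rw [hcastF]; positivity
      have hsN : 0 < Real.sqrt ((n+2:ℕ):ℝ) := Real.sqrt_pos.2 hN
      by_cases hs : s ∈ Set.Ioc (0:ℝ) (π * Real.sqrt ((n+2:ℕ):ℝ))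
      · rw [Set.indicator_of_mem hs]
        obtain ⟨hs1, hs2⟩ := hs
        have hθ1 : 0 ≤ s / Real.sqrt ((n+2:ℕ):ℝ) := by positivity
        have hθ2 : s / Real.sqrt ((n+2:ℕ):ℝ) ≤ π := (div_le_iff₀ hsN).mpr (by linarith)
        have hb := hgle _ ⟨hθ1, hθ2⟩
        have hθsq : (s / Real.sqrt ((n+2:ℕ):ℝ))^2 = s^2/((n:ℝ)+2) := by
          rw [div_pow, Real.sq_sqrt hN.le, hcastF]
        have hstep1 : ‖Real.cos (s/Real.sqrt ((n+2:ℕ):ℝ)) *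
            (g (s/Real.sqrt ((n+2:ℕ):ℝ)))^((n+2)-1)‖
            ≤ Real.exp (-(c₀ * (s / Real.sqrt ((n+2:ℕ):ℝ))^2))^(n+1) := by
          rw [Real.norm_eq_abs, abs_mul, abs_pow]
          calc |Real.cos (s/Real.sqrt ((n+2:ℕ):ℝ))| * |g (s/Real.sqrt ((n+2:ℕ):ℝ))|^((n+2)-1)
              ≤ 1 * Real.exp (-(c₀ * (s / Real.sqrt ((n+2:ℕ):ℝ))^2))^((n+2)-1) := by
                apply mul_le_mul (Real.abs_cos_le_one _)
                  (pow_le_pow_left₀ (abs_nonneg _) hb _) (by positivity) zero_le_one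
          _ = Real.exp (-(c₀ * (s / Real.sqrt ((n+2:ℕ):ℝ))^2))^(n+1) := by norm_num
        refine hstep1.trans ?_
        rw [← Real.exp_nat_mul, Real.exp_le_exp]
        rw [hθsq]
        have hhalf : (1:ℝ)/2 ≤ ((n:ℝ)+1)/((n:ℝ)+2) := by
          rw [div_le_div_iff₀ (by norm_num) (by positivity)]
          linarith
        have hq : c₀*s^2*((1:ℝ)/2) ≤ c₀*s^2*(((n:ℝ)+1)/((n:ℝ)+2)) :=
          mul_le_mul_of_nonneg_left hhalf (by positivity)
        have e1 : ((n:ℕ)+1 : ℝ) * -(c₀ * (s^2/((n:ℝ)+2))) = -(c₀*s^2*(((n:ℝ)+1)/((n:ℝ)+2))) := by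
          push_cast; ring
        have e2 : -(c₀/2) * s^2 = -(c₀*s^2*((1:ℝ)/2)) := by ring
        push_cast
        rw [show ((n:ℝ)+1) * -(c₀ * (s^2/((n:ℝ)+2))) = -(c₀*s^2*(((n:ℝ)+1)/((n:ℝ)+2))) from by ring,
          e2]
        linarith [hq]
      · rw [Set.indicator_of_notMem hs]
        simp only [norm_zero]
        positivity
    · refine Filter.Eventually.of_forall fun s => ?_
      rcases le_or_gt s 0 with hs | hs
      · have hFs : ∀ n : ℕ, F (n+2) s = 0 := by
          intro n
          rw [hF]
          simp only []
          apply Set.indicator_of_notMem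
          intro hmem
          exact absurd hmem.1 (not_lt.mpr hs)
        have hGs : G s = 0 := by
          rw [hG]
          simp only []
          apply Set.indicator_of_notMem
          simpa using hs
        simp only [hFs, hGs]
        exact tendsto_const_nhds
      · have hGs : G s = Real.exp (-a * s^2) := Set.indicator_of_mem hs _
        rw [hGs]
        have hN : ∀ n : ℕ, (0:ℝ) < ((n+2:ℕ):ℝ) := fun n => by rw [hcastF]; positivity
        have hsqrtTop' : Tendsto (fun n : ℕ => Real.sqrt ((n+2:ℕ):ℝ)) atTop atTop := by
          refine hsqrtTop.congr fun n => ?_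
          rw [hcastF]
        have hθ0 : Tendsto (fun n : ℕ => s / Real.sqrt ((n+2:ℕ):ℝ)) atTop (nhds 0) :=
          tendsto_const_nhds.div_atTop hsqrtTop'
        have hθpos : ∀ n : ℕ, 0 < s / Real.sqrt ((n+2:ℕ):ℝ) :=
          fun n => div_pos hs (Real.sqrt_pos.2 (hN n))
        have hθ0' : Tendsto (fun n : ℕ => s / Real.sqrt ((n+2:ℕ):ℝ)) atTop
            (nhdsWithin 0 {(0:ℝ)}ᶜ) := by
          rw [tendsto_nhdsWithin_iff]
          exact ⟨hθ0, Filter.Eventually.of_forall fun n => Set.mem_compl_singleton_iff.mpr (hθpos n).ne'⟩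
        have hLg : Tendsto (fun n : ℕ =>
            Real.log (g (s / Real.sqrt ((n+2:ℕ):ℝ))) / (s / Real.sqrt ((n+2:ℕ):ℝ))^2)
            atTop (nhds (-a)) := by
          have h := (tendsto_log_one_sub_mul_cos (2*su/ρ) (by positivity)).comp hθ0'
          have hval : -(2*su/ρ/2) = -a := by rw [ha]; ring
          rw [hval] at h
          refine h.congr fun n => ?_
          simp only [Function.comp]
          rw [← hgalt]
        have hθsqn : ∀ n : ℕ, (s / Real.sqrt ((n+2:ℕ):ℝ))^2 = s^2/((n:ℝ)+2) := by
          intro n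
          rw [div_pow, Real.sq_sqrt (hN n).le, hcastF]
        have hratio : Tendsto (fun n : ℕ => ((n:ℝ)+1) * (s^2/((n:ℝ)+2))) atTop (nhds (s^2)) := by
          have h1 : Tendsto (fun n : ℕ => ((n:ℝ)+1)/((n:ℝ)+2)) atTop (nhds 1) := by
            have h2 := (tendsto_natCast_div_add_atTop (1:ℝ)).comp (tendsto_add_atTop_nat 1)
            refine h2.congr fun n => ?_
            simp only [Function.comp]
            push_cast
            ring_nf
          have h3 := h1.const_mul (s^2)
          rw [mul_one] at h3
          refine h3.congr fun n => by ring
        have hlogmul : Tendsto (fun n : ℕ =>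
            ((n:ℝ)+1) * Real.log (g (s / Real.sqrt ((n+2:ℕ):ℝ)))) atTop
            (nhds (-(a*s^2))) := by
          have h := hratio.mul hLg
          rw [show s^2 * -a = -(a*s^2) from by ring] at h
          refine h.congr fun n => ?_
          rw [← hθsqn n]
          have hne : (s / Real.sqrt ((n+2:ℕ):ℝ))^2 ≠ 0 := by
            exact pow_ne_zero _ (hθpos n).ne'
          field_simp
        have hg0 : g 0 = 1 := by
          rw [hg]
          simp only [Real.cos_zero, mul_one]
          rw [← hρ]
          exact div_self hρpos.ne'
        have hglim : Tendsto (fun n : ℕ => g (s / Real.sqrt ((n+2:ℕ):ℝ))) atTop (nhds 1) := by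
          have := (hgcont.tendsto 0).comp hθ0
          rwa [hg0] at this
        have hgpos : ∀ᶠ n : ℕ in atTop, 0 < g (s / Real.sqrt ((n+2:ℕ):ℝ)) :=
          hglim.eventually (eventually_gt_nhds zero_lt_one)
        have hcoslim : Tendsto (fun n : ℕ => Real.cos (s / Real.sqrt ((n+2:ℕ):ℝ))) atTop
            (nhds 1) := by
          have := (Real.continuous_cos.tendsto 0).comp hθ0
          rwa [Real.cos_zero] at this
        have hexplim : Tendsto (fun n : ℕ =>
            Real.exp (((n:ℝ)+1) * Real.log (g (s / Real.sqrt ((n+2:ℕ):ℝ))))) atTop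
            (nhds (Real.exp (-(a*s^2)))) := (Real.continuous_exp.tendsto _).comp hlogmul
        have hmul := hcoslim.mul hexplim
        rw [one_mul] at hmul
        have hsle : ∀ᶠ n : ℕ in atTop, s ≤ π * Real.sqrt ((n+2:ℕ):ℝ) :=
          (hsqrtTop'.const_mul_atTop hπ).eventually_ge_atTop s
        rw [show -a * s^2 = -(a*s^2) from by ring]
        refine Tendsto.congr' ?_ hmul
        filter_upwards [hgpos, hsle] with n h1 h2
        rw [hF]
        simp only []
        rw [Set.indicator_of_mem (show s ∈ Set.Ioc (0:ℝ) (π * Real.sqrt ((n+2:ℕ):ℝ)) from ⟨hs, h2⟩)]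
        congr 1
        rw [show (n+2)-1 = n+1 from rfl]
        rw [← Real.exp_log (pow_pos h1 (n+1)), Real.log_pow]
        push_cast
        ring_nf
  have hmain : Tendsto (fun n : ℕ =>
      Real.sqrt (n+2) * ∫ θ in (0:ℝ)..π, Real.cos θ * g θ^((n+2)-1)) atTop
      (nhds (Real.sqrt (π/a)/2)) := by
    rw [← hGint]
    refine hdct.congr fun n => ?_
    rw [← hsub (n+2) (by omega)]
    norm_cast
  rw [show Real.sqrt (π/(su/ρ))/2 = Real.sqrt (π/a)/2 from rfl]
  rw [← tendsto_add_atTop_iff_nat 2]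
  convert hmain using 2 with n
  norm_cast

end AuxBridge

/-- For `t, u > 0`, the weighted coefficients
`b_i = Σ_{2m ≤ i} m·B_{i−2m,m}·t^{i−2m}·u^m` satisfy `b_i ~ c'·i^{1/2}·(t + 2√u)^i`
for some `c' > 0`. -/
theorem bridge_diagonal_weighted_asymptotics (t u : ℝ) (ht : 0 < t) (hu : 0 < u) :
    ∃ c' : ℝ, 0 < c' ∧
      Tendsto
        (fun i : ℕ =>
          (∑ m ∈ Finset.range (i / 2 + 1),
              (m : ℝ) * (Nat.factorial i : ℝ) /
                  ((Nat.factorial (i - 2 * m) : ℝ) * (Nat.factorial m : ℝ) *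
                    (Nat.factorial m : ℝ)) *
                t ^ (i - 2 * m) * u ^ m) /
            (Real.sqrt i * (t + 2 * Real.sqrt u) ^ i))
        atTop (nhds c') := by
  have hπ : (0:ℝ) < π := Real.pi_pos
  have hsupos : 0 < Real.sqrt u := Real.sqrt_pos.2 hu
  have hρpos : 0 < t + 2*Real.sqrt u := by positivity
  refine ⟨(Real.sqrt u/(π*(t + 2*Real.sqrt u))) *
    (Real.sqrt (π/(Real.sqrt u/(t + 2*Real.sqrt u)))/2), by positivity, ?_⟩
  have hlim := (laplace_limit t u ht hu).const_mul (Real.sqrt u/(π*(t + 2*Real.sqrt u)))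
  refine hlim.congr' ?_
  filter_upwards [eventually_ge_atTop 1] with i hi
  rw [sum_eq_integral t u hu i hi]
  have hint : (∫ θ in (0:ℝ)..π,
        Real.cos θ * ((t + 2*Real.sqrt u*Real.cos θ)/(t + 2*Real.sqrt u))^(i-1))
      = (1/(t + 2*Real.sqrt u)^(i-1)) * ∫ θ in (0:ℝ)..π,
          Real.cos θ * (t + 2*Real.sqrt u*Real.cos θ)^(i-1) := by
    rw [← intervalIntegral.integral_const_mul]
    apply intervalIntegral.integral_congr
    intro θ _
    simp only [div_pow]
    ring
  rw [hint]
  have hipos : (0:ℝ) < i := by exact_mod_cast hi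
  have hsipos : 0 < Real.sqrt i := Real.sqrt_pos.2 hipos
  have hii : Real.sqrt i * Real.sqrt i = (i:ℝ) := Real.mul_self_sqrt hipos.le
  have hpow : (t + 2*Real.sqrt u)^i = (t + 2*Real.sqrt u)^(i-1) * (t + 2*Real.sqrt u) := by
    rw [← pow_succ]
    congr 1
    omega
  have hρpowne : (t + 2*Real.sqrt u)^(i-1) ≠ 0 := by positivity
  rw [hpow]
  field_simp
  rw [sq, hii]
  ring
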